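/- In the ring Z[s]/(s^2), setting A = [[s, 1+s],[1-s, -s]] and B = [[0,1],[1,0]], we have (A·B)^m ≠ I and (B·A)^m ≠ I for every positive integer m; consequently the representation ρ: FVB_2 → GL_2(Z[s]/(s^2)) sending σ_1 to B and τ_1 to A is injective on the infinite dihedral group FVB_2 = Z_2 * Z_2. -/
import Mathlib

open DualNumber

namespace Stmt3Aux

noncomputable abbrev Am : Matrix (Fin 2) (Fin 2) (DualNumber ℤ) := !![eps, 1 + eps; 1 - eps, -eps]
noncomputable abbrev Bm : Matrix (Fin 2) (Fin 2) (DualNumber ℤ) := !![0, 1; 1, 0]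

lemma BA_pow (m : ℕ) : (Bm * Am) ^ m =
    !![1 - (m : DualNumber ℤ) * eps, -((m : DualNumber ℤ) * eps);
       (m : DualNumber ℤ) * eps, 1 + (m : DualNumber ℤ) * eps] := by
  induction m with
  | zero => simp [Matrix.one_fin_two]
  | succ k ih =>
    rw [pow_succ, ih]
    refine Matrix.ext fun i j => ?_
    fin_cases i <;> fin_cases j <;>
      · simp [Matrix.mul_apply, Fin.sum_univ_two, Nat.cast_succ]
        ring_nf

lemma AB_pow (m : ℕ) : (Am * Bm) ^ m =
    !![1 + (m : DualNumber ℤ) * eps, (m : DualNumber ℤ) * eps;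
       -((m : DualNumber ℤ) * eps), 1 - (m : DualNumber ℤ) * eps] := by
  induction m with
  | zero => simp [Matrix.one_fin_two]
  | succ k ih =>
    rw [pow_succ, ih]
    refine Matrix.ext fun i j => ?_
    fin_cases i <;> fin_cases j <;>
      · simp [Matrix.mul_apply, Fin.sum_univ_two, Nat.cast_succ]
        ring_nf

lemma eps_ne (m : ℕ) (hm : m ≠ 0) : ((m : DualNumber ℤ)) * eps ≠ 0 := by
  intro h
  have := congrArg TrivSqZeroExt.snd h
  simp at this
  exact hm (by exact_mod_cast this)

lemma BA_pow_ne_one (m : ℕ) (hm : 1 ≤ m) : (Bm * Am) ^ m ≠ 1 := by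
  rw [BA_pow]
  intro h
  have := congrFun (congrFun h 1) 0
  simp [Matrix.one_fin_two] at this
  exact eps_ne m (by omega) this

lemma AB_pow_ne_one (m : ℕ) (hm : 1 ≤ m) : (Am * Bm) ^ m ≠ 1 := by
  rw [AB_pow]
  intro h
  have := congrFun (congrFun h 0) 1
  simp [Matrix.one_fin_two] at this
  exact eps_ne m (by omega) this

lemma BA_pow_B_ne_one (m : ℕ) : (Bm * Am) ^ m * Bm ≠ 1 := by
  rw [BA_pow]
  intro h
  have h0 := congrFun (congrFun h 0) 0
  simp [Matrix.mul_apply, Fin.sum_univ_two, Matrix.one_fin_two] at h0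
  have := congrArg TrivSqZeroExt.fst h0
  simp at this

lemma AB_pow_B_ne_one (m : ℕ) : (Am * Bm) ^ m * Bm ≠ 1 := by
  rw [AB_pow]
  intro h
  have h0 := congrFun (congrFun h 0) 0
  simp [Matrix.mul_apply, Fin.sum_univ_two, Matrix.one_fin_two] at h0
  have := congrArg TrivSqZeroExt.fst h0
  simp at this

abbrev R : Set (FreeGroup (Fin 2)) := {(FreeGroup.of 0) ^ 2, (FreeGroup.of 1) ^ 2}

lemma of_sq (i : Fin 2) : (PresentedGroup.of (rels := R) i) * PresentedGroup.of i = 1 := by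
  have h : ((FreeGroup.of i) ^ 2 : FreeGroup (Fin 2)) ∈ R := by
    fin_cases i
    · exact Set.mem_insert _ _
    · exact Set.mem_insert_of_mem _ rfl
  have h2 : ((FreeGroup.of i) ^ 2 : FreeGroup (Fin 2)) ∈ Subgroup.normalClosure R :=
    Subgroup.subset_normalClosure h
  have : (QuotientGroup.mk ((FreeGroup.of i) ^ 2) : PresentedGroup R) = 1 :=
    (QuotientGroup.eq_one_iff _).mpr h2
  rw [pow_two] at this
  exact this

noncomputable abbrev a : PresentedGroup R := PresentedGroup.of 0
noncomputable abbrev b : PresentedGroup R := PresentedGroup.of 1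
noncomputable abbrev X : PresentedGroup R := a * b

lemma a_inv : a⁻¹ = a := inv_eq_of_mul_eq_one_right (of_sq 0)
lemma b_inv : b⁻¹ = b := inv_eq_of_mul_eq_one_right (of_sq 1)

lemma hsemi : SemiconjBy a X X⁻¹ := by
  show a * X = X⁻¹ * a
  rw [mul_inv_rev, a_inv, b_inv, show a * (a*b) = (a*a)*b by group, of_sq 0,
    one_mul, mul_assoc, of_sq 0, mul_one]

lemma swap (n : ℤ) : a * X ^ n = X ^ (-n) * a := by
  have := hsemi.zpow_right n
  rwa [inv_zpow, ← zpow_neg] at this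

lemma normal_form (g : PresentedGroup R) : ∃ n : ℤ, g = X ^ n ∨ g = X ^ n * a := by
  have hg : g ∈ Subgroup.closure (Set.range (PresentedGroup.of (rels := R))) := by
    rw [PresentedGroup.closure_range_of]; trivial
  induction hg using Subgroup.closure_induction with
  | mem x hx =>
    obtain ⟨i, rfl⟩ := hx
    fin_cases i
    · exact ⟨0, Or.inr (by rw [zpow_zero, one_mul]; rfl)⟩
    · refine ⟨-1, Or.inr ?_⟩
      rw [zpow_neg_one]
      show b = (a*b)⁻¹ * a
      rw [mul_inv_rev, a_inv, b_inv, mul_assoc, of_sq 0, mul_one]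
  | one => exact ⟨0, Or.inl (zpow_zero X).symm⟩
  | mul x y hx hy ihx ihy =>
    obtain ⟨n, hn | hn⟩ := ihx <;> obtain ⟨k, hk | hk⟩ := ihy <;> subst hn hk
    · exact ⟨n + k, Or.inl (zpow_add X n k).symm⟩
    · exact ⟨n + k, Or.inr (by rw [← mul_assoc, ← zpow_add])⟩
    · refine ⟨n - k, Or.inr ?_⟩
      rw [mul_assoc, swap k, ← mul_assoc, ← zpow_add, ← sub_eq_add_neg]
    · refine ⟨n - k, Or.inl ?_⟩
      calc X ^ n * a * (X ^ k * a) = X ^ n * (a * X ^ k) * a := by group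
        _ = X ^ n * (X ^ (-k) * a) * a := by rw [swap]
        _ = X ^ (n - k) * (a * a) := by rw [sub_eq_add_neg, zpow_add]; group
        _ = X ^ (n - k) := by rw [of_sq 0, mul_one]
  | inv x hx ihx =>
    obtain ⟨n, hn | hn⟩ := ihx <;> subst hn
    · exact ⟨-n, Or.inl (zpow_neg X n).symm⟩
    · refine ⟨n, Or.inr ?_⟩
      rw [mul_inv_rev, a_inv, ← zpow_neg, swap, neg_neg]

end Stmt3Aux

open Stmt3Aux in
open DualNumber in
theorem stmt_3 :
    let s : DualNumber ℤ := eps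
    let A : Matrix (Fin 2) (Fin 2) (DualNumber ℤ) := !![s, 1 + s; 1 - s, -s]
    let B : Matrix (Fin 2) (Fin 2) (DualNumber ℤ) := !![0, 1; 1, 0]
    -- relations of FVB₂ = Z₂ * Z₂ : σ₁² = τ₁² = 1
    let rels : Set (FreeGroup (Fin 2)) := {(FreeGroup.of 0) ^ 2, (FreeGroup.of 1) ^ 2}
    (∀ m : ℕ, 1 ≤ m → (A * B) ^ m ≠ 1 ∧ (B * A) ^ m ≠ 1) ∧
      ∀ ρ : PresentedGroup rels →* Matrix.GeneralLinearGroup (Fin 2) (DualNumber ℤ),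
        ((ρ (PresentedGroup.of 0) : Matrix (Fin 2) (Fin 2) (DualNumber ℤ)) = B) →
        ((ρ (PresentedGroup.of 1) : Matrix (Fin 2) (Fin 2) (DualNumber ℤ)) = A) →
        Function.Injective ρ := by
  intro s A B rels
  constructor
  · exact fun m hm => ⟨AB_pow_ne_one m hm, BA_pow_ne_one m hm⟩
  · intro ρ hB hA
    have hX : (ρ X : Matrix (Fin 2) (Fin 2) (DualNumber ℤ)) = Bm * Am := by
      rw [show ρ X = ρ a * ρ b from map_mul ρ a b, Units.val_mul, hB, hA]
    have hXinv : (((ρ X)⁻¹ : Matrix.GeneralLinearGroup (Fin 2) (DualNumber ℤ)) :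
        Matrix (Fin 2) (Fin 2) (DualNumber ℤ)) = Am * Bm := by
      rw [← map_inv, show X⁻¹ = b * a by rw [mul_inv_rev, a_inv, b_inv], map_mul,
        Units.val_mul, hB, hA]
    rw [injective_iff_map_eq_one]
    intro g hg
    obtain ⟨n, hn | hn⟩ := normal_form g
    · subst hn
      rcases Int.eq_nat_or_neg n with ⟨m, rfl | rfl⟩
      · rw [zpow_natCast] at hg ⊢
        have hmat : (Bm * Am) ^ m = 1 := by
          have := congrArg Units.val hg
          rw [map_pow, Units.val_pow_eq_pow_val, hX, Units.val_one] at this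
          exact this
        have hm0 : m = 0 := by
          by_contra hmne
          exact BA_pow_ne_one m (Nat.one_le_iff_ne_zero.mpr hmne) hmat
        subst hm0; simp
      · rw [zpow_neg, ← inv_zpow, zpow_natCast] at hg ⊢
        have hmat : (Am * Bm) ^ m = 1 := by
          have := congrArg Units.val hg
          rw [map_pow, map_inv, Units.val_pow_eq_pow_val, hXinv, Units.val_one] at this
          exact this
        have hm0 : m = 0 := by
          by_contra hmne
          exact AB_pow_ne_one m (Nat.one_le_iff_ne_zero.mpr hmne) hmat
        subst hm0; simp
    · subst hn
      exfalso
      have hmat := congrArg Units.val hg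
      rw [map_mul, map_zpow] at hmat
      rcases Int.eq_nat_or_neg n with ⟨m, rfl | rfl⟩
      · rw [zpow_natCast] at hmat
        refine BA_pow_B_ne_one m ?_
        have : (Bm * Am) ^ m * Bm = ((ρ X ^ m * ρ a :
            Matrix.GeneralLinearGroup (Fin 2) (DualNumber ℤ)) :
            Matrix (Fin 2) (Fin 2) (DualNumber ℤ)) := by
          rw [Units.val_mul, Units.val_pow_eq_pow_val, hX, hB]
        rw [this, hmat]; rfl
      · rw [zpow_neg, ← inv_zpow, zpow_natCast] at hmat
        refine AB_pow_B_ne_one m ?_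
        have : (Am * Bm) ^ m * Bm = (((ρ X)⁻¹ ^ m * ρ a :
            Matrix.GeneralLinearGroup (Fin 2) (DualNumber ℤ)) :
            Matrix (Fin 2) (Fin 2) (DualNumber ℤ)) := by
          rw [Units.val_mul, Units.val_pow_eq_pow_val, hXinv, hB]
        rw [this, hmat]; rfl
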